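/- arXiv:1702.04071 — 2 statements merged into one kernel-verified Lean document; each statement's English description precedes it below -/
import Mathlib

section
/- Let R be the two-sided ideal of B(Z_2) generated by the images of the arrows ρ_1,…,ρ_7. Then R^8 = 0 but R^7 ≠ 0; in particular B(Z_2) is a finite-dimensional algebra whose arrow ideal is nilpotent of nilpotency index exactly 8. -/
open FreeAlgebra

/-- Generators of the path algebra `B(Z_2)`: four vertex idempotents and seven arrows. -/
inductive Gen2 : Type
  | e : Fin 4 → Gen2
  | r : Fin 7 → Gen2

/-- Sources of the arrows ρ₁,…,ρ₇. -/
def src2 : Fin 7 → Fin 4 := ![0, 1, 0, 1, 2, 3, 2]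

/-- Targets of the arrows ρ₁,…,ρ₇. -/
def tgt2 : Fin 7 → Fin 4 := ![1, 0, 1, 2, 3, 2, 3]

/-- Relations presenting `B(Z_2)` as a quotient of the free algebra: the path-algebra
relations for the quiver together with ρ₁ρ₄ = ρ₄ρ₇ = ρ₂ρ₁ = ρ₃ρ₂ = ρ₆ρ₅ = ρ₇ρ₆ = 0. -/
inductive Rel2 : FreeAlgebra (ZMod 2) Gen2 → FreeAlgebra (ZMod 2) Gen2 → Prop
  | idem (k : Fin 4) :
      Rel2 (ι (ZMod 2) (Gen2.e k) * ι (ZMod 2) (Gen2.e k)) (ι (ZMod 2) (Gen2.e k))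
  | orth (k l : Fin 4) (h : k ≠ l) : Rel2 (ι (ZMod 2) (Gen2.e k) * ι (ZMod 2) (Gen2.e l)) 0
  | sum : Rel2 (∑ k : Fin 4, ι (ZMod 2) (Gen2.e k)) 1
  | source (m : Fin 7) :
      Rel2 (ι (ZMod 2) (Gen2.e (src2 m)) * ι (ZMod 2) (Gen2.r m)) (ι (ZMod 2) (Gen2.r m))
  | target (m : Fin 7) :
      Rel2 (ι (ZMod 2) (Gen2.r m) * ι (ZMod 2) (Gen2.e (tgt2 m))) (ι (ZMod 2) (Gen2.r m))
  | rel14 : Rel2 (ι (ZMod 2) (Gen2.r 0) * ι (ZMod 2) (Gen2.r 3)) 0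
  | rel47 : Rel2 (ι (ZMod 2) (Gen2.r 3) * ι (ZMod 2) (Gen2.r 6)) 0
  | rel21 : Rel2 (ι (ZMod 2) (Gen2.r 1) * ι (ZMod 2) (Gen2.r 0)) 0
  | rel32 : Rel2 (ι (ZMod 2) (Gen2.r 2) * ι (ZMod 2) (Gen2.r 1)) 0
  | rel65 : Rel2 (ι (ZMod 2) (Gen2.r 5) * ι (ZMod 2) (Gen2.r 4)) 0
  | rel76 : Rel2 (ι (ZMod 2) (Gen2.r 6) * ι (ZMod 2) (Gen2.r 5)) 0

/-- The genus-2 bordered algebra `B(Z_2)`. -/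
abbrev B2 : Type := RingQuot Rel2

/-- The idempotents i₀, i₁, i₂, i₃ in `B(Z_2)`. -/
noncomputable def idem2 (k : Fin 4) : B2 :=
  RingQuot.mkAlgHom (ZMod 2) Rel2 (ι (ZMod 2) (Gen2.e k))

/-- The arrows ρ₁,…,ρ₇ in `B(Z_2)` (indexed by `Fin 7`). -/
noncomputable def arr2 (m : Fin 7) : B2 :=
  RingQuot.mkAlgHom (ZMod 2) Rel2 (ι (ZMod 2) (Gen2.r m))

/-- The arrow ρ_k in `B(Z_2)`, using 1-based indexing; `0` for out-of-range indices. -/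
noncomputable def ρ2 (k : ℕ) : B2 :=
  if h : 1 ≤ k ∧ k ≤ 7 then arr2 ⟨k - 1, by omega⟩ else 0

/-- The chord ρ_{[i,j]} = ρ_i ρ_{i+1} ⋯ ρ_j in `B(Z_2)` (1-based indices). -/
noncomputable def chord2 (i j : ℕ) : B2 :=
  ((List.range' i (j + 1 - i)).map ρ2).prod



/-! ### Auxiliary development -/

section Aux

open Submodule in
noncomputable section

-- basic relation lemmas in B2
lemma rel_eq {x y : FreeAlgebra (ZMod 2) Gen2} (h : Rel2 x y) :
    RingQuot.mkAlgHom (ZMod 2) Rel2 x = RingQuot.mkAlgHom (ZMod 2) Rel2 y :=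
  RingQuot.mkAlgHom_rel _ h

lemma e_mul_e_self (k : Fin 4) : idem2 k * idem2 k = idem2 k := by
  simpa [idem2, map_mul] using rel_eq (Rel2.idem k)

lemma e_mul_e_ne {k l : Fin 4} (h : k ≠ l) : idem2 k * idem2 l = 0 := by
  simpa [idem2, map_mul] using rel_eq (Rel2.orth k l h)

lemma sum_e : ∑ k : Fin 4, idem2 k = 1 := by
  simpa [idem2, map_sum] using rel_eq Rel2.sum

lemma e_mul_r (m : Fin 7) : idem2 (src2 m) * arr2 m = arr2 m := by
  simpa [idem2, arr2, map_mul] using rel_eq (Rel2.source m)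

lemma r_mul_e (m : Fin 7) : arr2 m * idem2 (tgt2 m) = arr2 m := by
  simpa [idem2, arr2, map_mul] using rel_eq (Rel2.target m)

lemma e_mul_r_ne {k : Fin 4} {m : Fin 7} (h : k ≠ src2 m) : idem2 k * arr2 m = 0 := by
  rw [← e_mul_r m, ← mul_assoc, e_mul_e_ne h, zero_mul]

lemma r_mul_e_ne {m : Fin 7} {k : Fin 4} (h : tgt2 m ≠ k) : arr2 m * idem2 k = 0 := by
  rw [← r_mul_e m, mul_assoc, e_mul_e_ne h, mul_zero]

lemma r_mul_r_orth {a b : Fin 7} (h : tgt2 a ≠ src2 b) : arr2 a * arr2 b = 0 := by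
  calc arr2 a * arr2 b = arr2 a * idem2 (tgt2 a) * (idem2 (src2 b) * arr2 b) := by
        rw [r_mul_e, e_mul_r]
    _ = arr2 a * (idem2 (tgt2 a) * (idem2 (src2 b) * arr2 b)) := by
        rw [mul_assoc]
    _ = 0 := by rw [← mul_assoc (idem2 (tgt2 a)), e_mul_e_ne h, zero_mul, mul_zero]

lemma r_mul_r_zero {a b : Fin 7} (h : (b : ℕ) ≠ (a : ℕ) + 1) : arr2 a * arr2 b = 0 := by
  fin_cases a <;> fin_cases b <;>
    first
      | exact absurd (by decide) h
      | exact r_mul_r_orth (by decide)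
      | simpa [arr2, map_mul] using rel_eq Rel2.rel14
      | simpa [arr2, map_mul] using rel_eq Rel2.rel47
      | simpa [arr2, map_mul] using rel_eq Rel2.rel21
      | simpa [arr2, map_mul] using rel_eq Rel2.rel32
      | simpa [arr2, map_mul] using rel_eq Rel2.rel65
      | simpa [arr2, map_mul] using rel_eq Rel2.rel76

-- the 13-dimensional left-regular-type representation

def srcOf : Fin 13 → Fin 4 := ![3,0,1,0,1,2,0,1,0,1,2,3,2]

def act (m : Fin 7) (c : Fin 13) : ℕ :=
  if c = 0 then (if m = 4 then 5 else if m = 6 then 12 else 13)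
  else if (c : ℕ) ≤ 5 then (if (m : ℕ) + 2 = (c : ℕ) then (c : ℕ) - 1 else 13)
  else (if (m : ℕ) + 7 = (c : ℕ) then (c : ℕ) - 1 else 13)

def repE (k : Fin 4) : Matrix (Fin 13) (Fin 13) (ZMod 2) :=
  Matrix.of fun a b => if a = b ∧ srcOf a = k then 1 else 0

def repR (m : Fin 7) : Matrix (Fin 13) (Fin 13) (ZMod 2) :=
  Matrix.of fun a c => if (a : ℕ) = act m c then 1 else 0

def rep : Gen2 → Matrix (Fin 13) (Fin 13) (ZMod 2)
  | .e k => repE k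
  | .r m => repR m

set_option maxHeartbeats 2000000 in
lemma rep_rel : ∀ ⦃x y⦄, Rel2 x y →
    (FreeAlgebra.lift (ZMod 2) rep) x = (FreeAlgebra.lift (ZMod 2) rep) y := by
  intro x y h
  induction h <;>
    simp only [map_mul, map_sum, map_one, map_zero, lift_ι_apply, rep]
  case idem k => fin_cases k <;> decide
  case orth k l h => fin_cases k <;> fin_cases l <;> first | exact absurd rfl h | decide
  case sum => decide
  case source m => fin_cases m <;> decide
  case target m => fin_cases m <;> decide
  all_goals decide

def φB : B2 →ₐ[ZMod 2] Matrix (Fin 13) (Fin 13) (ZMod 2) :=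
  RingQuot.liftAlgHom (ZMod 2) ⟨FreeAlgebra.lift (ZMod 2) rep, rep_rel⟩

lemma φB_arr (m : Fin 7) : φB (arr2 m) = repR m := by
  rw [arr2, φB, RingQuot.liftAlgHom_mkAlgHom_apply, lift_ι_apply]
  rfl

-- chord lemmas

lemma ρ2_eq (k : ℕ) (h1 : 1 ≤ k) (h7 : k ≤ 7) : ρ2 k = arr2 ⟨k - 1, by omega⟩ :=
  dif_pos ⟨h1, h7⟩

lemma chord2_single (i : ℕ) : chord2 i i = ρ2 i := by
  simp [chord2]

lemma chord2_succ_left {i j : ℕ} (h : i ≤ j) : chord2 i j = ρ2 i * chord2 (i + 1) j := by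
  unfold chord2
  rw [show j + 1 - i = (j + 1 - (i + 1)) + 1 by omega, List.range'_succ, List.map_cons,
    List.prod_cons]

lemma chord2_mul_chord2 {i j l : ℕ} (hij : i ≤ j) (hjl : j < l) :
    chord2 i j * chord2 (j + 1) l = chord2 i l := by
  unfold chord2
  rw [← List.prod_append, ← List.map_append]
  have := @List.range'_append_1 i (j + 1 - i) (l + 1 - (j + 1))
  rw [show i + (j + 1 - i) = j + 1 by omega] at this
  rw [this, show j + 1 - i + (l + 1 - (j + 1)) = l + 1 - i by omega]

lemma chord2_eq_mul_last {i j : ℕ} (h1 : 1 ≤ i) (h : i ≤ j) :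
    chord2 i j = chord2 i (j - 1) * ρ2 j := by
  rcases eq_or_lt_of_le h with rfl | hlt
  · rw [chord2_single]
    have : chord2 i (i - 1) = 1 := by
      unfold chord2
      rw [show i - 1 + 1 - i = 0 by omega]
      simp
    rw [this, one_mul]
  · rw [← chord2_mul_chord2 (show i ≤ j - 1 by omega) (show j - 1 < j by omega),
      show j - 1 + 1 = j by omega, chord2_single]

lemma ρ2_mul_ρ2_zero {a b : ℕ} (ha1 : 1 ≤ a) (ha : a ≤ 7) (hb1 : 1 ≤ b) (hb : b ≤ 7)
    (h : b ≠ a + 1) : ρ2 a * ρ2 b = 0 := by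
  rw [ρ2_eq a ha1 ha, ρ2_eq b hb1 hb]
  exact r_mul_r_zero (by simp; omega)

lemma chord2_mul_chord2_zero {i j k l : ℕ} (hi : 1 ≤ i) (hij : i ≤ j) (hj : j ≤ 7)
    (hk : 1 ≤ k) (hkl : k ≤ l) (hl : l ≤ 7) (h : k ≠ j + 1) :
    chord2 i j * chord2 k l = 0 := by
  rw [chord2_eq_mul_last hi hij, chord2_succ_left hkl, mul_assoc,
    ← mul_assoc (ρ2 j), ρ2_mul_ρ2_zero (by omega) hj hk (by omega) h, zero_mul, mul_zero]

lemma e_mul_ρ2_or (kk : Fin 4) {i : ℕ} (h1 : 1 ≤ i) (h7 : i ≤ 7) :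
    idem2 kk * ρ2 i = ρ2 i ∨ idem2 kk * ρ2 i = 0 := by
  rw [ρ2_eq i h1 h7]
  by_cases h : kk = src2 ⟨i - 1, by omega⟩
  · exact Or.inl (h ▸ e_mul_r _)
  · exact Or.inr (e_mul_r_ne h)

lemma ρ2_mul_e_or (kk : Fin 4) {i : ℕ} (h1 : 1 ≤ i) (h7 : i ≤ 7) :
    ρ2 i * idem2 kk = ρ2 i ∨ ρ2 i * idem2 kk = 0 := by
  rw [ρ2_eq i h1 h7]
  by_cases h : tgt2 ⟨i - 1, by omega⟩ = kk
  · exact Or.inl (by rw [← h]; exact r_mul_e _)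
  · exact Or.inr (r_mul_e_ne h)

lemma e_mul_chord2_or (kk : Fin 4) {i j : ℕ} (h1 : 1 ≤ i) (hij : i ≤ j) (h7 : j ≤ 7) :
    idem2 kk * chord2 i j = chord2 i j ∨ idem2 kk * chord2 i j = 0 := by
  rw [chord2_succ_left hij, ← mul_assoc]
  rcases e_mul_ρ2_or kk h1 (by omega) with h | h <;> rw [h]
  · exact Or.inl rfl
  · exact Or.inr (zero_mul _)

lemma chord2_mul_e_or (kk : Fin 4) {i j : ℕ} (h1 : 1 ≤ i) (hij : i ≤ j) (h7 : j ≤ 7) :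
    chord2 i j * idem2 kk = chord2 i j ∨ chord2 i j * idem2 kk = 0 := by
  rw [chord2_eq_mul_last h1 hij, mul_assoc]
  rcases ρ2_mul_e_or kk (show 1 ≤ j by omega) h7 with h | h <;> rw [h]
  · exact Or.inl rfl
  · exact Or.inr (mul_zero _)

lemma arr2_eq_chord2 (m : Fin 7) : arr2 m = chord2 ((m : ℕ) + 1) ((m : ℕ) + 1) := by
  rw [chord2_single, ρ2_eq _ (by omega) (by omega : (m : ℕ) + 1 ≤ 7)]
  congr 1

-- spanning sets

def Sgen : Set B2 :=
  Set.range idem2 ∪ {x | ∃ i j : ℕ, 1 ≤ i ∧ i ≤ j ∧ j ≤ 7 ∧ x = chord2 i j}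

def Tset (n : ℕ) : Set B2 :=
  {x | ∃ i j : ℕ, 1 ≤ i ∧ i ≤ j ∧ j ≤ 7 ∧ n ≤ j + 1 - i ∧ x = chord2 i j}

def CB : Submodule (ZMod 2) B2 := Submodule.span (ZMod 2) Sgen

def TB (n : ℕ) : Submodule (ZMod 2) B2 := Submodule.span (ZMod 2) (Tset n)

lemma one_mem_CB : (1 : B2) ∈ CB := by
  rw [← sum_e]
  exact Submodule.sum_mem _ fun k _ =>
    Submodule.subset_span (Or.inl (Set.mem_range_self k))

lemma mul_SS_mem : ∀ x ∈ Sgen, ∀ y ∈ Sgen, x * y ∈ CB := by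
  rintro x (⟨k, rfl⟩ | ⟨i, j, hi, hij, hj, rfl⟩) y (⟨l, rfl⟩ | ⟨p, q, hp, hpq, hq, rfl⟩)
  · by_cases h : k = l
    · subst h; rw [e_mul_e_self]
      exact Submodule.subset_span (Or.inl (Set.mem_range_self k))
    · rw [e_mul_e_ne h]; exact zero_mem _
  · rcases e_mul_chord2_or k hp hpq hq with h | h <;> rw [h]
    · exact Submodule.subset_span (Or.inr ⟨p, q, hp, hpq, hq, rfl⟩)
    · exact zero_mem _
  · rcases chord2_mul_e_or l hi hij hj with h | h <;> rw [h]
    · exact Submodule.subset_span (Or.inr ⟨i, j, hi, hij, hj, rfl⟩)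
    · exact zero_mem _
  · by_cases h : p = j + 1
    · subst h
      rw [chord2_mul_chord2 hij (by omega)]
      exact Submodule.subset_span (Or.inr ⟨i, q, hi, by omega, hq, rfl⟩)
    · rw [chord2_mul_chord2_zero hi hij hj hp hpq hq h]; exact zero_mem _

lemma CB_mul_CB : ∀ x ∈ CB, ∀ y ∈ CB, x * y ∈ CB := by
  intro x hx y hy
  have h : CB * CB ≤ CB := by
    rw [CB, Submodule.span_mul_span, Submodule.span_le]
    rintro z ⟨a, ha, b, hb, rfl⟩
    exact mul_SS_mem a ha b hb
  exact h (Submodule.mul_mem_mul hx hy)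

lemma CB_eq_top : CB = ⊤ := by
  rw [eq_top_iff]
  intro x _
  have hsurj :
      Algebra.adjoin (ZMod 2)
        (Set.range fun g => RingQuot.mkAlgHom (ZMod 2) Rel2 (ι (ZMod 2) g)) = ⊤ := by
    have h1 : Algebra.adjoin (ZMod 2)
        (Set.range (ι (ZMod 2) : Gen2 → FreeAlgebra (ZMod 2) Gen2)) = ⊤ :=
      FreeAlgebra.adjoin_range_ι (ZMod 2) Gen2
    have h2 := congrArg (Subalgebra.map (RingQuot.mkAlgHom (ZMod 2) Rel2)) h1
    rw [AlgHom.map_adjoin, Algebra.map_top, ← Set.range_comp] at h2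
    rw [Function.comp_def] at h2
    rw [h2]
    exact (AlgHom.range_eq_top _).mpr (RingQuot.mkAlgHom_surjective _ _)
  have hx : x ∈ Algebra.adjoin (ZMod 2)
      (Set.range fun g => RingQuot.mkAlgHom (ZMod 2) Rel2 (ι (ZMod 2) g)) := by
    rw [hsurj]; trivial
  refine Algebra.adjoin_induction ?_ ?_ ?_ ?_ hx
  · rintro _ ⟨g, rfl⟩
    cases g with
    | e k => exact Submodule.subset_span (Or.inl ⟨k, rfl⟩)
    | r m =>
      show arr2 m ∈ CB
      rw [arr2_eq_chord2 m]
      exact Submodule.subset_span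
        (Or.inr ⟨(m : ℕ) + 1, (m : ℕ) + 1, by omega, le_refl _, by omega, rfl⟩)
  · intro r
    rw [Algebra.algebraMap_eq_smul_one]
    exact Submodule.smul_mem _ _ one_mem_CB
  · intro a b _ _ ha hb; exact add_mem ha hb
  · intro a b _ _ ha hb; exact CB_mul_CB a ha b hb

-- graded pieces

lemma Sgen_mul_T_mem {n : ℕ} : ∀ x ∈ Sgen, ∀ y ∈ Tset n, x * y ∈ TB n := by
  rintro x (⟨k, rfl⟩ | ⟨i, j, hi, hij, hj, rfl⟩) y ⟨p, q, hp, hpq, hq, hn, rfl⟩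
  · rcases e_mul_chord2_or k hp hpq hq with h | h <;> rw [h]
    · exact Submodule.subset_span ⟨p, q, hp, hpq, hq, hn, rfl⟩
    · exact zero_mem _
  · by_cases h : p = j + 1
    · subst h
      rw [chord2_mul_chord2 hij (by omega)]
      exact Submodule.subset_span ⟨i, q, hi, by omega, hq, by omega, rfl⟩
    · rw [chord2_mul_chord2_zero hi hij hj hp hpq hq h]; exact zero_mem _

lemma T_mul_Sgen_mem {n : ℕ} : ∀ x ∈ Tset n, ∀ y ∈ Sgen, x * y ∈ TB n := by
  rintro x ⟨i, j, hi, hij, hj, hn, rfl⟩ y (⟨k, rfl⟩ | ⟨p, q, hp, hpq, hq, rfl⟩)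
  · rcases chord2_mul_e_or k hi hij hj with h | h <;> rw [h]
    · exact Submodule.subset_span ⟨i, j, hi, hij, hj, hn, rfl⟩
    · exact zero_mem _
  · by_cases h : p = j + 1
    · subst h
      rw [chord2_mul_chord2 hij (by omega)]
      exact Submodule.subset_span ⟨i, q, hi, by omega, hq, by omega, rfl⟩
    · rw [chord2_mul_chord2_zero hi hij hj hp hpq hq h]; exact zero_mem _

lemma mul_mem_TB {n : ℕ} (x : B2) {y : B2} (hy : y ∈ TB n) : x * y ∈ TB n := by
  have hx : x ∈ CB := by rw [CB_eq_top]; trivial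
  have h : CB * TB n ≤ TB n := by
    rw [CB, TB, Submodule.span_mul_span, Submodule.span_le]
    rintro z ⟨a, ha, b, hb, rfl⟩
    exact Sgen_mul_T_mem a ha b hb
  exact h (Submodule.mul_mem_mul hx hy)

lemma TB_mul_mem {n : ℕ} {y : B2} (hy : y ∈ TB n) (x : B2) : y * x ∈ TB n := by
  have hx : x ∈ CB := by rw [CB_eq_top]; trivial
  have h : TB n * CB ≤ TB n := by
    rw [CB, TB, Submodule.span_mul_span, Submodule.span_le]
    rintro z ⟨a, ha, b, hb, rfl⟩
    exact T_mul_Sgen_mem a ha b hb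
  exact h (Submodule.mul_mem_mul hy hx)

lemma Tset_mul_Tset_mem {m n : ℕ} : ∀ x ∈ Tset m, ∀ y ∈ Tset n, x * y ∈ TB (m + n) := by
  rintro x ⟨i, j, hi, hij, hj, hm, rfl⟩ y ⟨p, q, hp, hpq, hq, hn, rfl⟩
  by_cases h : p = j + 1
  · subst h
    rw [chord2_mul_chord2 hij (by omega)]
    exact Submodule.subset_span ⟨i, q, hi, by omega, hq, by omega, rfl⟩
  · rw [chord2_mul_chord2_zero hi hij hj hp hpq hq h]; exact zero_mem _

lemma TB_mul_TB {m n : ℕ} {x y : B2} (hx : x ∈ TB m) (hy : y ∈ TB n) :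
    x * y ∈ TB (m + n) := by
  have h : TB m * TB n ≤ TB (m + n) := by
    rw [TB, TB, Submodule.span_mul_span, Submodule.span_le]
    rintro z ⟨a, ha, b, hb, rfl⟩
    exact Tset_mul_Tset_mem a ha b hb
  exact h (Submodule.mul_mem_mul hx hy)

lemma TB_eight : TB 8 = ⊥ := by
  rw [TB, Submodule.span_eq_bot]
  rintro x ⟨i, j, hi, hij, hj, hn, rfl⟩
  omega

-- the two-sided ideal

def JB : TwoSidedIdeal B2 :=
  TwoSidedIdeal.mk' (TB 1 : Set B2) (zero_mem _)
    (fun hx hy => add_mem hx hy)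
    (fun hx => neg_mem hx)
    (fun {x y} hy => mul_mem_TB x hy)
    (fun {x y} hx => TB_mul_mem hx y)

lemma mem_JB {x : B2} : x ∈ JB ↔ x ∈ TB 1 :=
  TwoSidedIdeal.mem_mk' _ _ _ _ _ _ x

lemma mem_span_arr {x : B2} (hx : x ∈ TwoSidedIdeal.span (Set.range arr2)) :
    x ∈ TB 1 := by
  have h := TwoSidedIdeal.mem_span_iff.mp hx JB ?_
  · exact mem_JB.mp h
  · rintro _ ⟨m, rfl⟩
    refine SetLike.mem_coe.mpr (mem_JB.mpr ?_)
    rw [arr2_eq_chord2 m]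
    exact Submodule.subset_span ⟨(m : ℕ) + 1, (m : ℕ) + 1, by omega, le_refl _, by omega,
      by omega, rfl⟩

lemma list_prod_mem_TB : ∀ l : List B2, l ≠ [] → (∀ x ∈ l, x ∈ TB 1) →
    l.prod ∈ TB l.length := by
  intro l
  induction l with
  | nil => intro h; exact absurd rfl h
  | cons x l ih =>
    intro _ hmem
    cases l with
    | nil =>
      simpa using hmem x (by simp)
    | cons y l' =>
      rw [List.prod_cons]
      have h1 := hmem x (by simp)
      have h2 := ih (by simp) (fun z hz => hmem z (List.mem_cons_of_mem _ hz))
      simpa [List.length_cons, add_comm] using TB_mul_TB h1 h2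

end
end Aux


/-- the two-sided ideal R of B(Z_2) generated by the arrows satisfies
R^8 = 0 (every product of 8 elements of R vanishes) but R^7 ≠ 0; in particular
B(Z_2) is finite dimensional with arrow ideal nilpotent of index exactly 8. -/
theorem stmt_4 :
    FiniteDimensional (ZMod 2) B2 ∧
    (∀ f : Fin 8 → B2, (∀ t, f t ∈ TwoSidedIdeal.span (Set.range arr2)) →
      (List.ofFn f).prod = 0) ∧
    (∃ f : Fin 7 → B2, (∀ t, f t ∈ TwoSidedIdeal.span (Set.range arr2)) ∧
      (List.ofFn f).prod ≠ 0) := by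
  refine ⟨?_, ?_, ?_⟩
  · -- finite dimensionality
    have hfin : Sgen.Finite := by
      apply Set.Finite.union (Set.finite_range idem2)
      have : {x : B2 | ∃ i j : ℕ, 1 ≤ i ∧ i ≤ j ∧ j ≤ 7 ∧ x = chord2 i j} ⊆
          Set.range (fun p : Fin 8 × Fin 8 => chord2 p.1 p.2) := by
        rintro x ⟨i, j, hi, hij, hj, rfl⟩
        exact ⟨(⟨i, by omega⟩, ⟨j, by omega⟩), rfl⟩
      exact Set.Finite.subset (Set.finite_range _) this
    refine Module.finite_def.mpr ⟨hfin.toFinset, ?_⟩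
    rw [Set.Finite.coe_toFinset]
    exact CB_eq_top
  · -- R^8 = 0
    intro f hf
    have h1 : ∀ x ∈ List.ofFn f, x ∈ TB 1 := by
      intro x hx
      rw [List.mem_ofFn] at hx
      obtain ⟨t, rfl⟩ := hx
      exact mem_span_arr (hf t)
    have h2 := list_prod_mem_TB (List.ofFn f) (by simp) h1
    rw [List.length_ofFn] at h2
    rw [TB_eight] at h2
    simpa using h2
  · -- R^7 ≠ 0
    refine ⟨arr2, fun t => TwoSidedIdeal.subset_span ⟨t, rfl⟩, ?_⟩
    intro h
    have h2 : φB (List.ofFn arr2).prod = (List.ofFn repR).prod := by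
      have hfn : ⇑φB ∘ arr2 = repR := funext φB_arr
      rw [map_list_prod, List.map_ofFn, hfn]
    rw [h, map_zero] at h2
    have h3 : (List.ofFn repR).prod ≠ 0 := by decide
    exact h3 h2.symm
end

section
/- The center of B(Z_2) is one-dimensional over F_2, spanned by the identity element 1 = i_0 + i_1 + i_2 + i_3. -/
open FreeAlgebra

set_option maxRecDepth 10000
set_option maxHeartbeats 1000000

/-! ### Auxiliary development: a concrete 32-dimensional matrix model of `B(Z_2)` -/

/-- Index type for the path basis: vertices and chords `[i,j]` (0-based).
Pairs with `i > j` are junk indices (the corresponding path element is zero). -/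
abbrev PB : Type := Fin 4 ⊕ (Fin 7 × Fin 7)

/-- Structure constants: product of two basis paths is a basis path or zero. -/
def pmul : PB → PB → Option PB
  | .inl k, .inl l => if k = l then some (.inl k) else none
  | .inl k, .inr y => if k = src2 y.1 then some (.inr y) else none
  | .inr x, .inl k => if k = tgt2 x.2 then some (.inr x) else none
  | .inr x, .inr y => if (x.2 : ℕ) + 1 = (y.1 : ℕ) then some (.inr (x.1, y.2)) else none

lemma stv : ∀ (j i' : Fin 7), (j : ℕ) + 1 = (i' : ℕ) →
    ((tgt2 j : Fin 4) : ℕ) = ((src2 i' : Fin 4) : ℕ) := by decide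

set_option maxHeartbeats 1000000 in
theorem pmul_assoc : ∀ p q r : PB,
    (pmul p q).bind (fun s => pmul s r) = (pmul q r).bind (fun s => pmul p s) := by
  rintro (k | ⟨i, j⟩) (l | ⟨i', j'⟩) (n | ⟨i'', j''⟩) <;>
  · simp only [pmul]
    split_ifs <;> simp only [Option.bind_some, Option.bind_none] <;> (try dsimp only) <;>
      (try split_ifs) <;> try rfl
    all_goals exfalso
    all_goals simp_all only [Fin.ext_iff, Fin.le_def, stv, not_and, not_le, not_true,
      not_false_iff, true_implies, and_true, true_and, and_imp, imp_false, le_refl,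
      forall_true_left]
    all_goals try omega
    all_goals (rename_i a b c; first
      | exact b (stv _ _ c)
      | exact a (stv _ _ c).symm
      | exact b (stv _ _ c.2.2)
      | exact a (stv _ _ c.2.2).symm)

/-- Target vertex of a basis path. -/
def tgtP : PB → Fin 4
  | .inl k => k
  | .inr x => tgt2 x.2

/-- Source vertex of a basis path. -/
def srcP : PB → Fin 4
  | .inl k => k
  | .inr x => src2 x.1

/-- Validity of a basis index. -/
def okb : PB → Bool
  | .inl _ => true
  | .inr x => x.1 ≤ x.2

lemma pmul_ok : ∀ p q r : PB, okb p = true → okb q = true →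
    pmul p q = some r → okb r = true := by
  rintro (k | ⟨i, j⟩) (l | ⟨i', j'⟩) r hp hq <;> simp only [pmul] <;>
    split_ifs with hcond <;> intro h <;>
    first
      | exact h.elim
      | exact Option.noConfusion h
      | (obtain rfl := Option.some_inj.mp h
         first
           | rfl
           | exact hq
           | exact hp
           | (simp only [okb, decide_eq_true_eq, Fin.le_def] at hp hq ⊢; omega))

/-- The (left regular representation) matrix of a basis path. -/
def fM (p : PB) : Matrix PB PB (ZMod 2) :=
  Matrix.of fun r q => if pmul p q = some r then 1 else 0

lemma fM_apply (p r q : PB) : fM p r q = if pmul p q = some r then 1 else 0 := rfl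

lemma fM_mul (p q : PB) : fM p * fM q = (pmul p q).elim 0 fM := by
  ext r s
  rw [Matrix.mul_apply]
  have hassoc := pmul_assoc p q s
  rcases h : pmul q s with _ | t0
  · rw [h] at hassoc
    simp only [Option.bind_none] at hassoc
    have hz : ∀ t : PB, fM p r t * fM q t s = 0 := by
      intro t; simp [fM_apply, h]
    rw [Finset.sum_congr rfl fun t _ => hz t, Finset.sum_const_zero]
    rcases h2 : pmul p q with _ | u
    · simp
    · rw [h2] at hassoc
      simp only [Option.bind_some] at hassoc
      simp [fM_apply, hassoc]
  · rw [h] at hassoc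
    simp only [Option.bind_some] at hassoc
    have hterm : ∀ t : PB, fM p r t * fM q t s = if t0 = t then fM p r t else 0 := by
      intro t
      simp only [fM_apply, h, Option.some_inj, mul_ite, mul_one, mul_zero]
    rw [Finset.sum_congr rfl fun t _ => hterm t, Finset.sum_ite_eq Finset.univ t0 _,
      if_pos (Finset.mem_univ _)]
    rcases h2 : pmul p q with _ | u
    · rw [h2] at hassoc
      simp only [Option.bind_none] at hassoc
      simp [fM_apply, ← hassoc]
    · rw [h2] at hassoc
      simp only [Option.bind_some] at hassoc
      simp only [Option.elim_some, fM_apply, hassoc]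

set_option maxRecDepth 4000 in
lemma fM_sum_one : ∑ k : Fin 4, fM (.inl k) = 1 := by
  ext r q
  rw [Matrix.sum_apply, Matrix.one_apply]
  revert r q
  decide

/-! Entry extraction lemmas.  Throughout, `c` is a coefficient vector supported on
valid indices, and `Z = ∑ p, c p • fM p`. -/

section Entries

variable (c : PB → ZMod 2)

lemma Z_entry (hc : ∀ p : PB, okb p = false → c p = 0) (r q p0 : PB) (hp0 : okb p0 = true)
    (h : ∀ p, okb p = true → (pmul p q = some r ↔ p = p0)) :
    (∑ p, c p • fM p) r q = c p0 := by
  rw [Matrix.sum_apply]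
  have hterm : ∀ p : PB, (c p • fM p) r q = if p = p0 then c p else 0 := by
    intro p
    rw [Matrix.smul_apply, fM_apply]
    rcases hok : okb p with _ | _
    · rw [hc p hok]
      simp only [zero_smul]
      split_ifs <;> rfl
    · by_cases hp : p = p0
      · subst hp
        rw [if_pos ((h p hok).mpr rfl), if_pos rfl, smul_eq_mul, mul_one]
      · rw [if_neg (fun hcon => hp ((h p hok).mp hcon)), if_neg hp, smul_zero]
  rw [Finset.sum_congr rfl fun p _ => hterm p, Finset.sum_ite_eq' Finset.univ p0 c]
  simp

lemma Z_entry0 (hc : ∀ p : PB, okb p = false → c p = 0) (r q : PB) (h : ∀ p, okb p = true → ¬ pmul p q = some r) :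
    (∑ p, c p • fM p) r q = 0 := by
  rw [Matrix.sum_apply]
  have hterm : ∀ p : PB, (c p • fM p) r q = 0 := by
    intro p
    rw [Matrix.smul_apply, fM_apply]
    rcases hok : okb p with _ | _
    · rw [hc p hok]; simp
    · simp [h p hok]
  rw [Finset.sum_congr rfl fun p _ => hterm p, Finset.sum_const_zero]

lemma Z_junk_row (hc : ∀ p : PB, okb p = false → c p = 0) (t q : PB) (ht : okb t = false) (hq : okb q = true) :
    (∑ p, c p • fM p) t q = 0 := by
  rw [Matrix.sum_apply]
  have hterm : ∀ p : PB, (c p • fM p) t q = 0 := by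
    intro p
    rw [Matrix.smul_apply, fM_apply]
    rcases hok : okb p with _ | _
    · rw [hc p hok]; simp
    · have : ¬ pmul p q = some t := by
        intro hcon
        rw [pmul_ok p q t hok hq hcon] at ht
        cases ht
      simp [this]
  rw [Finset.sum_congr rfl fun p _ => hterm p, Finset.sum_const_zero]

lemma mul_fM (W : Matrix PB PB (ZMod 2)) (g r q : PB) :
    (W * fM g) r q = (pmul g q).elim 0 (fun t => W r t) := by
  rw [Matrix.mul_apply]
  rcases h : pmul g q with _ | t0
  · simp [fM_apply, h]
  · have hterm : ∀ t : PB, W r t * fM g t q = if t0 = t then W r t else 0 := by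
      intro t
      simp only [fM_apply, h, Option.some_inj, mul_ite, mul_one, mul_zero]
    rw [Finset.sum_congr rfl fun t _ => hterm t, Finset.sum_ite_eq Finset.univ t0 _,
      if_pos (Finset.mem_univ _)]
    rfl

lemma fM_mul_Z (hc : ∀ p : PB, okb p = false → c p = 0) (g r q t0 : PB) (hq : okb q = true) (ht0 : okb t0 = true)
    (h : ∀ t, okb t = true → (pmul g t = some r ↔ t = t0)) :
    (fM g * (∑ p, c p • fM p)) r q = (∑ p, c p • fM p) t0 q := by
  rw [Matrix.mul_apply]
  have hterm : ∀ t : PB, fM g r t * (∑ p, c p • fM p) t q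
      = if t = t0 then (∑ p, c p • fM p) t q else 0 := by
    intro t
    rw [fM_apply]
    rcases hok : okb t with _ | _
    · rw [Z_junk_row c hc t q hok hq]
      simp only [mul_zero, ite_self]
    · by_cases ht : t = t0
      · subst ht
        rw [if_pos ((h t hok).mpr rfl), if_pos rfl, one_mul]
      · rw [if_neg (fun hcon => ht ((h t hok).mp hcon)), if_neg ht, zero_mul]
  rw [Finset.sum_congr rfl fun t _ => hterm t, Finset.sum_ite_eq' Finset.univ t0 _]
  simp

lemma fM_mul_Z0 (hc : ∀ p : PB, okb p = false → c p = 0) (g r q : PB) (hq : okb q = true)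
    (h : ∀ t, okb t = true → ¬ pmul g t = some r) :
    (fM g * (∑ p, c p • fM p)) r q = 0 := by
  rw [Matrix.mul_apply]
  have hterm : ∀ t : PB, fM g r t * (∑ p, c p • fM p) t q = 0 := by
    intro t
    rw [fM_apply]
    rcases hok : okb t with _ | _
    · rw [Z_junk_row c hc t q hok hq, mul_zero]
    · simp [h t hok]
  rw [Finset.sum_congr rfl fun t _ => hterm t, Finset.sum_const_zero]

end Entries

/-! ### The algebra map from `B2` to matrices -/

/-- Images of the generators. -/
def gm : Gen2 → Matrix PB PB (ZMod 2)
  | .e k => fM (.inl k)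
  | .r m => fM (.inr (m, m))

lemma gm_rel : ∀ ⦃x y : FreeAlgebra (ZMod 2) Gen2⦄, Rel2 x y →
    FreeAlgebra.lift (ZMod 2) gm x = FreeAlgebra.lift (ZMod 2) gm y := by
  intro x y hxy
  induction hxy with
  | idem k =>
      simp only [map_mul, lift_ι_apply, gm, fM_mul]
      rw [show pmul (.inl k) (.inl k) = some (.inl k) from by simp [pmul]]
      rfl
  | orth k l h =>
      simp only [map_mul, lift_ι_apply, gm, fM_mul, map_zero]
      rw [show pmul (.inl k) (.inl l) = none from by simp [pmul, h]]
      rfl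
  | sum =>
      rw [map_sum, map_one]
      simp only [lift_ι_apply, gm]
      exact fM_sum_one
  | source m =>
      simp only [map_mul, lift_ι_apply, gm, fM_mul]
      rw [show pmul (.inl (src2 m)) (.inr (m, m)) = some (.inr (m, m)) from by simp [pmul]]
      rfl
  | target m =>
      simp only [map_mul, lift_ι_apply, gm, fM_mul]
      rw [show pmul (.inr (m, m)) (.inl (tgt2 m)) = some (.inr (m, m)) from by simp [pmul]]
      rfl
  | rel14 =>
      simp only [map_mul, lift_ι_apply, gm, fM_mul, map_zero]
      rw [show pmul (.inr ((0 : Fin 7), (0 : Fin 7))) (.inr (3, 3)) = none from by decide]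
      rfl
  | rel47 =>
      simp only [map_mul, lift_ι_apply, gm, fM_mul, map_zero]
      rw [show pmul (.inr ((3 : Fin 7), (3 : Fin 7))) (.inr (6, 6)) = none from by decide]
      rfl
  | rel21 =>
      simp only [map_mul, lift_ι_apply, gm, fM_mul, map_zero]
      rw [show pmul (.inr ((1 : Fin 7), (1 : Fin 7))) (.inr (0, 0)) = none from by decide]
      rfl
  | rel32 =>
      simp only [map_mul, lift_ι_apply, gm, fM_mul, map_zero]
      rw [show pmul (.inr ((2 : Fin 7), (2 : Fin 7))) (.inr (1, 1)) = none from by decide]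
      rfl
  | rel65 =>
      simp only [map_mul, lift_ι_apply, gm, fM_mul, map_zero]
      rw [show pmul (.inr ((5 : Fin 7), (5 : Fin 7))) (.inr (4, 4)) = none from by decide]
      rfl
  | rel76 =>
      simp only [map_mul, lift_ι_apply, gm, fM_mul, map_zero]
      rw [show pmul (.inr ((6 : Fin 7), (6 : Fin 7))) (.inr (5, 5)) = none from by decide]
      rfl

/-- The representation of `B2` on the path basis. -/
noncomputable def φM : B2 →ₐ[ZMod 2] Matrix PB PB (ZMod 2) :=
  RingQuot.liftAlgHom (ZMod 2) ⟨FreeAlgebra.lift (ZMod 2) gm, gm_rel⟩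

lemma φM_idem (k : Fin 4) : φM (idem2 k) = fM (.inl k) := by
  rw [idem2, φM, RingQuot.liftAlgHom_mkAlgHom_apply, lift_ι_apply]
  rfl

lemma φM_arr (m : Fin 7) : φM (arr2 m) = fM (.inr (m, m)) := by
  rw [arr2, φM, RingQuot.liftAlgHom_mkAlgHom_apply, lift_ι_apply]
  rfl

/-! ### Basic multiplication rules in `B2` -/

lemma hEE (k l : Fin 4) : idem2 k * idem2 l = if k = l then idem2 k else 0 := by
  split_ifs with h
  · subst h
    rw [idem2, ← map_mul]
    exact RingQuot.mkAlgHom_rel _ (Rel2.idem k)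
  · rw [idem2, idem2, ← map_mul, RingQuot.mkAlgHom_rel _ (Rel2.orth k l h), map_zero]

lemma one_eq_sum_idem2 : (1 : B2) = ∑ k : Fin 4, idem2 k := by
  have h := RingQuot.mkAlgHom_rel (ZMod 2) Rel2.sum
  rw [map_sum, map_one] at h
  exact h.symm

lemma hEA (k : Fin 4) (m : Fin 7) :
    idem2 k * arr2 m = if k = src2 m then arr2 m else 0 := by
  have hsrc : idem2 (src2 m) * arr2 m = arr2 m := by
    rw [idem2, arr2, ← map_mul]
    exact RingQuot.mkAlgHom_rel _ (Rel2.source m)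
  split_ifs with h
  · subst h; exact hsrc
  · rw [← hsrc, ← mul_assoc, hEE, if_neg h, zero_mul]

lemma hAE (m : Fin 7) (k : Fin 4) :
    arr2 m * idem2 k = if k = tgt2 m then arr2 m else 0 := by
  have htgt : arr2 m * idem2 (tgt2 m) = arr2 m := by
    rw [idem2, arr2, ← map_mul]
    exact RingQuot.mkAlgHom_rel _ (Rel2.target m)
  split_ifs with h
  · subst h; exact htgt
  · rw [← htgt, mul_assoc, hEE, if_neg (fun hh => h hh.symm), mul_zero]

lemma hAA_gen (m m' : Fin 7) (h : tgt2 m ≠ src2 m') : arr2 m * arr2 m' = 0 := by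
  have h1 : arr2 m * idem2 (tgt2 m) = arr2 m := by rw [hAE, if_pos rfl]
  have h2 : idem2 (src2 m') * arr2 m' = arr2 m' := by rw [hEA, if_pos rfl]
  rw [← h1, ← h2, mul_assoc, ← mul_assoc (idem2 (tgt2 m)), hEE, if_neg h, zero_mul,
    mul_zero]

lemma hrel0 {a b : Fin 7}
    (h : Rel2 (ι (ZMod 2) (Gen2.r a) * ι (ZMod 2) (Gen2.r b)) 0) :
    arr2 a * arr2 b = 0 := by
  rw [arr2, arr2, ← map_mul, RingQuot.mkAlgHom_rel _ h, map_zero]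

lemma hAA (m m' : Fin 7) (h : (m : ℕ) + 1 ≠ (m' : ℕ)) : arr2 m * arr2 m' = 0 := by
  by_cases hst : tgt2 m = src2 m'
  · fin_cases m <;> fin_cases m' <;>
      first
        | exact absurd rfl h
        | exact hrel0 Rel2.rel14
        | exact hrel0 Rel2.rel47
        | exact hrel0 Rel2.rel21
        | exact hrel0 Rel2.rel32
        | exact hrel0 Rel2.rel65
        | exact hrel0 Rel2.rel76
        | exact absurd hst (by decide)
  · exact hAA_gen m m' hst

/-! ### Path elements of `B2` -/

/-- The arrow with natural-number index (0-based), or `0` out of range. -/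
noncomputable def arr2N (n : ℕ) : B2 := if h : n < 7 then arr2 ⟨n, h⟩ else 0

lemma arr2N_coe (m : Fin 7) : arr2N (m : ℕ) = arr2 m := by
  rw [arr2N, dif_pos m.isLt]

/-- The chord from `a` to `b` (0-based natural number indices). -/
noncomputable def chordN (a b : ℕ) : B2 := ((List.range' a (b + 1 - a)).map arr2N).prod

lemma chordN_self (a : ℕ) : chordN a a = arr2N a := by
  simp [chordN]

lemma chordN_concat (a b : ℕ) (h : a ≤ b) :
    chordN a (b + 1) = chordN a b * arr2N (b + 1) := by
  unfold chordN
  rw [show b + 1 + 1 - a = (b + 1 - a) + 1 from by omega, List.range'_1_concat,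
    List.map_append, List.prod_append]
  simp only [List.map_cons, List.map_nil, List.prod_cons, List.prod_nil, mul_one]
  congr 2
  omega

lemma chordN_last (a b : ℕ) (h : a ≤ b) :
    chordN a b = ((List.range' a (b - a)).map arr2N).prod * arr2N b := by
  unfold chordN
  rw [show b + 1 - a = (b - a) + 1 from by omega, List.range'_1_concat,
    List.map_append, List.prod_append]
  simp only [List.map_cons, List.map_nil, List.prod_cons, List.prod_nil, mul_one]
  congr 2
  omega

/-- Path elements of `B2` indexed by `PB`. -/
noncomputable def pel : PB → B2
  | .inl k => idem2 k
  | .inr x => if (x.1 : ℕ) ≤ (x.2 : ℕ) then chordN x.1 x.2 else 0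

lemma pel_inr (i j : Fin 7) (hij : (i : ℕ) ≤ (j : ℕ)) :
    pel (.inr (i, j)) = chordN i j := by
  rw [pel, if_pos hij]

lemma pel_diag (m : Fin 7) : pel (.inr (m, m)) = arr2 m := by
  rw [pel_inr m m le_rfl, chordN_self, arr2N_coe]

/-- The span of the path elements. -/
noncomputable def SP : Submodule (ZMod 2) B2 := Submodule.span (ZMod 2) (Set.range pel)

lemma pel_mem_SP (p : PB) : pel p ∈ SP := Submodule.subset_span ⟨p, rfl⟩

lemma one_mem_SP : (1 : B2) ∈ SP := by
  rw [one_eq_sum_idem2]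
  exact Submodule.sum_mem _ fun k _ => pel_mem_SP (.inl k)

lemma pel_mul_E (p : PB) (k : Fin 4) : pel p * idem2 k ∈ SP := by
  rcases p with l | ⟨i, j⟩
  · rw [pel, hEE]
    split_ifs
    · exact pel_mem_SP (.inl l)
    · exact zero_mem _
  · by_cases hij : (i : ℕ) ≤ (j : ℕ)
    · rw [pel_inr i j hij, chordN_last _ _ hij, mul_assoc, arr2N_coe, hAE]
      split_ifs
      · rw [← arr2N_coe, ← chordN_last _ _ hij, ← pel_inr i j hij]
        exact pel_mem_SP (.inr (i, j))
      · rw [mul_zero]; exact zero_mem _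
    · rw [pel, if_neg hij, zero_mul]; exact zero_mem _

lemma pel_mul_A (p : PB) (m : Fin 7) : pel p * arr2 m ∈ SP := by
  rcases p with l | ⟨i, j⟩
  · rw [pel, hEA]
    split_ifs
    · rw [← pel_diag]; exact pel_mem_SP (.inr (m, m))
    · exact zero_mem _
  · by_cases hij : (i : ℕ) ≤ (j : ℕ)
    · by_cases hm : (j : ℕ) + 1 = (m : ℕ)
      · have : pel (.inr (i, j)) * arr2 m = pel (.inr (i, m)) := by
          rw [pel_inr i j hij, pel_inr i m (by omega), ← arr2N_coe, ← hm,
            chordN_concat _ _ hij]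
        rw [this]
        exact pel_mem_SP _
      · rw [pel_inr i j hij, chordN_last _ _ hij, mul_assoc, arr2N_coe,
          hAA _ _ hm, mul_zero]
        exact zero_mem _
    · rw [pel, if_neg hij, zero_mul]; exact zero_mem _

lemma SP_mul_E {x : B2} (hx : x ∈ SP) (k : Fin 4) : x * idem2 k ∈ SP := by
  induction hx using Submodule.span_induction with
  | mem y hy => obtain ⟨p, rfl⟩ := hy; exact pel_mul_E p k
  | zero => rw [zero_mul]; exact zero_mem _
  | add a b _ _ ha hb => rw [add_mul]; exact add_mem ha hb
  | smul r a _ ha => rw [smul_mul_assoc]; exact Submodule.smul_mem _ _ ha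

lemma SP_mul_A {x : B2} (hx : x ∈ SP) (m : Fin 7) : x * arr2 m ∈ SP := by
  induction hx using Submodule.span_induction with
  | mem y hy => obtain ⟨p, rfl⟩ := hy; exact pel_mul_A p m
  | zero => rw [zero_mul]; exact zero_mem _
  | add a b _ _ ha hb => rw [add_mul]; exact add_mem ha hb
  | smul r a _ ha => rw [smul_mul_assoc]; exact Submodule.smul_mem _ _ ha

lemma SP_mul_arr2N {x : B2} (hx : x ∈ SP) (n : ℕ) : x * arr2N n ∈ SP := by
  rw [arr2N]
  split_ifs with h
  · exact SP_mul_A hx _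
  · rw [mul_zero]; exact zero_mem _

lemma SP_mul_chordN {x : B2} (hx : x ∈ SP) (n a : ℕ) : x * chordN a (a + n) ∈ SP := by
  induction n generalizing x with
  | zero => rw [Nat.add_zero, chordN_self]; exact SP_mul_arr2N hx a
  | succ n ih =>
      rw [show a + (n + 1) = (a + n) + 1 from rfl, chordN_concat _ _ (Nat.le_add_right a n),
        ← mul_assoc]
      exact SP_mul_arr2N (ih hx) _

lemma SP_mul_pel {x : B2} (hx : x ∈ SP) (p : PB) : x * pel p ∈ SP := by
  rcases p with l | ⟨i, j⟩
  · exact SP_mul_E hx l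
  · by_cases hij : (i : ℕ) ≤ (j : ℕ)
    · rw [pel_inr i j hij, show (j : ℕ) = (i : ℕ) + ((j : ℕ) - (i : ℕ)) from by omega]
      exact SP_mul_chordN hx _ _
    · rw [pel, if_neg hij, mul_zero]; exact zero_mem _

lemma SP_mul_SP {x y : B2} (hx : x ∈ SP) (hy : y ∈ SP) : x * y ∈ SP := by
  induction hy using Submodule.span_induction with
  | mem y hy => obtain ⟨p, rfl⟩ := hy; exact SP_mul_pel hx p
  | zero => rw [mul_zero]; exact zero_mem _
  | add a b _ _ ha hb => rw [mul_add]; exact add_mem ha hb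
  | smul r a _ ha => rw [mul_smul_comm]; exact Submodule.smul_mem _ _ ha

lemma mem_SP (z : B2) : z ∈ SP := by
  obtain ⟨x, rfl⟩ := RingQuot.mkAlgHom_surjective (ZMod 2) Rel2 z
  induction x using FreeAlgebra.induction with
  | grade0 r =>
      rw [AlgHom.commutes]
      have : algebraMap (ZMod 2) B2 r = r • 1 := by rw [Algebra.smul_def, mul_one]
      rw [this]
      exact Submodule.smul_mem _ _ one_mem_SP
  | grade1 g =>
      rcases g with k | m
      · exact pel_mem_SP (.inl k)
      · rw [show RingQuot.mkAlgHom (ZMod 2) Rel2 (ι (ZMod 2) (Gen2.r m)) = arr2 m from rfl,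
          ← pel_diag]
        exact pel_mem_SP _
  | mul a b ha hb => rw [map_mul]; exact SP_mul_SP ha hb
  | add a b ha hb => rw [map_add]; exact add_mem ha hb

/-! ### `φM` maps path elements to basis matrices -/

lemma φM_chord : ∀ (n : ℕ) (i j : Fin 7), (j : ℕ) = (i : ℕ) + n →
    φM (pel (.inr (i, j))) = fM (.inr (i, j)) := by
  intro n
  induction n with
  | zero =>
      intro i j hj
      have : j = i := Fin.ext (by omega)
      subst this
      rw [pel_diag, φM_arr]
  | succ n ih =>
      intro i j hj
      have hj7 : (i : ℕ) + n < 7 := by omega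
      set j' : Fin 7 := ⟨(i : ℕ) + n, hj7⟩ with hj'
      have hj'v : (j' : ℕ) = (i : ℕ) + n := rfl
      have hij' : (i : ℕ) ≤ (j' : ℕ) := by omega
      have h1 : pel (.inr (i, j)) = pel (.inr (i, j')) * arr2 j := by
        rw [pel_inr i j (by omega), pel_inr i j' hij',
          show (j : ℕ) = ((j' : ℕ)) + 1 from by omega,
          chordN_concat _ _ hij']
        congr 1
        rw [← arr2N_coe]
        congr 1
        omega
      rw [h1, map_mul, ih i j' (by omega), φM_arr, fM_mul]
      rw [show pmul (.inr (i, j')) (.inr (j, j)) = some (.inr (i, j)) from by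
        simp only [pmul]
        rw [if_pos (by omega)]]
      rfl

lemma φM_pel (p : PB) (hok : okb p = true) : φM (pel p) = fM p := by
  rcases p with k | ⟨i, j⟩
  · rw [pel, φM_idem]
  · have hij : (i : ℕ) ≤ (j : ℕ) := Fin.le_def.mp (of_decide_eq_true hok)
    exact φM_chord ((j : ℕ) - (i : ℕ)) i j (by omega)

/-! ### The center computation on the matrix side -/

lemma dec_offdiag1 : ∀ (p t : PB), okb p = true → srcP p ≠ tgtP p →
    ¬ pmul (.inl (tgtP p)) t = some p := by decide

lemma dec_offdiag2 : ∀ (p p' : PB), okb p = true →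
    (pmul p' (.inl (tgtP p)) = some p ↔ p' = p) := by decide

lemma dec_eqE1 : ∀ (m : Fin 7) (t : PB), okb t = true →
    (pmul (.inr (m, m)) t = some (.inr (m, m)) ↔ t = .inl (tgt2 m)) := by decide

lemma dec_eqE2 : ∀ (m : Fin 7) (p : PB), okb p = true →
    (pmul p (.inr (m, m)) = some (.inr (m, m)) ↔ p = .inl (src2 m)) := by decide

lemma dec_eqE3 : ∀ (m : Fin 7) (p : PB),
    pmul p (.inl (tgt2 m)) = some (.inl (tgt2 m)) ↔ p = .inl (tgt2 m) := by decide

section Key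

variable (c : PB → ZMod 2)

lemma key_offdiag (hc : ∀ p : PB, okb p = false → c p = 0)
    (hcomm_e : ∀ k : Fin 4,
      (∑ p, c p • fM p) * fM (.inl k) = fM (.inl k) * (∑ p, c p • fM p))
    (p : PB) (hok : okb p = true) (hst : srcP p ≠ tgtP p) : c p = 0 := by
  have H := congrFun (congrFun (hcomm_e (tgtP p)) p) (.inl (tgtP p))
  rw [mul_fM, show pmul (.inl (tgtP p)) (.inl (tgtP p)) = some (.inl (tgtP p)) from by
    simp [pmul]] at H
  simp only [Option.elim_some] at H
  rw [fM_mul_Z0 c hc (.inl (tgtP p)) p (.inl (tgtP p)) rfl (fun t _ => dec_offdiag1 p t hok hst)] at H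
  rw [Z_entry c hc _ _ p hok (fun p' _ => dec_offdiag2 p p' hok)] at H
  exact H

lemma key_eqE (hc : ∀ p : PB, okb p = false → c p = 0)
    (hcomm_a : ∀ m : Fin 7,
      (∑ p, c p • fM p) * fM (.inr (m, m)) = fM (.inr (m, m)) * (∑ p, c p • fM p))
    (m : Fin 7) : c (.inl (src2 m)) = c (.inl (tgt2 m)) := by
  have H := congrFun (congrFun (hcomm_a m) (.inr (m, m))) (.inl (tgt2 m))
  rw [mul_fM, show pmul (.inr (m, m)) (.inl (tgt2 m)) = some (.inr (m, m)) from by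
    simp [pmul]] at H
  simp only [Option.elim_some] at H
  rw [fM_mul_Z c hc (.inr (m, m)) (.inr (m, m)) (.inl (tgt2 m)) (.inl (tgt2 m)) rfl rfl (fun t hok => dec_eqE1 m t hok)] at H
  rw [Z_entry c hc _ _ (.inl (src2 m)) rfl (fun p hok => dec_eqE2 m p hok)] at H
  rw [Z_entry c hc _ _ (.inl (tgt2 m)) rfl (fun p _ => dec_eqE3 m p)] at H
  exact H

lemma key_loop01 (hc : ∀ p : PB, okb p = false → c p = 0)
    (hcomm_a : ∀ m : Fin 7,
      (∑ p, c p • fM p) * fM (.inr (m, m)) = fM (.inr (m, m)) * (∑ p, c p • fM p)) :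
    c (.inr (0, 1)) = 0 := by
  have H := congrFun (congrFun (hcomm_a 2) (.inr (0, 2))) (.inl 1)
  rw [mul_fM, show pmul (.inr ((2 : Fin 7), (2 : Fin 7))) (.inl 1) =
    some (.inr (2, 2)) from by decide] at H
  simp only [Option.elim_some] at H
  rw [Z_entry c hc _ _ (.inr (0, 1)) rfl (fun p _ => (by decide :
    ∀ p : PB, pmul p (.inr (2, 2)) = some (.inr (0, 2)) ↔ p = .inr (0, 1)) p)] at H
  rw [fM_mul_Z0 c hc (.inr (2, 2)) (.inr (0, 2)) (.inl 1) rfl (fun t _ => (by decide :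
    ∀ t : PB, ¬ pmul (.inr ((2 : Fin 7), (2 : Fin 7))) t = some (.inr (0, 2))) t)] at H
  exact H

lemma key_loop12 (hc : ∀ p : PB, okb p = false → c p = 0)
    (hcomm_a : ∀ m : Fin 7,
      (∑ p, c p • fM p) * fM (.inr (m, m)) = fM (.inr (m, m)) * (∑ p, c p • fM p)) :
    c (.inr (1, 2)) = 0 := by
  have H := congrFun (congrFun (hcomm_a 0) (.inr (0, 2))) (.inl 1)
  rw [mul_fM, show pmul (.inr ((0 : Fin 7), (0 : Fin 7))) (.inl 1) =
    some (.inr (0, 0)) from by decide] at H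
  simp only [Option.elim_some] at H
  rw [Z_entry0 c hc _ _ (fun p hok => (by decide :
    ∀ p : PB, okb p = true →
      ¬ pmul p (.inr (0, 0)) = some (.inr (0, 2))) p hok)] at H
  rw [fM_mul_Z c hc (.inr (0, 0)) (.inr (0, 2)) (.inl 1) (.inr (1, 2)) rfl rfl (fun t _ => (by decide :
    ∀ t : PB, pmul (.inr ((0 : Fin 7), (0 : Fin 7))) t = some (.inr (0, 2)) ↔
      t = .inr (1, 2)) t)] at H
  rw [Z_entry c hc _ _ (.inr (1, 2)) rfl (fun p _ => (by decide :
    ∀ p : PB, pmul p (.inl 1) = some (.inr (1, 2)) ↔ p = .inr (1, 2)) p)] at H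
  exact H.symm

lemma key_loop45 (hc : ∀ p : PB, okb p = false → c p = 0)
    (hcomm_a : ∀ m : Fin 7,
      (∑ p, c p • fM p) * fM (.inr (m, m)) = fM (.inr (m, m)) * (∑ p, c p • fM p)) :
    c (.inr (4, 5)) = 0 := by
  have H := congrFun (congrFun (hcomm_a 6) (.inr (4, 6))) (.inl 3)
  rw [mul_fM, show pmul (.inr ((6 : Fin 7), (6 : Fin 7))) (.inl 3) =
    some (.inr (6, 6)) from by decide] at H
  simp only [Option.elim_some] at H
  rw [Z_entry c hc _ _ (.inr (4, 5)) rfl (fun p _ => (by decide :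
    ∀ p : PB, pmul p (.inr (6, 6)) = some (.inr (4, 6)) ↔ p = .inr (4, 5)) p)] at H
  rw [fM_mul_Z0 c hc (.inr (6, 6)) (.inr (4, 6)) (.inl 3) rfl (fun t _ => (by decide :
    ∀ t : PB, ¬ pmul (.inr ((6 : Fin 7), (6 : Fin 7))) t = some (.inr (4, 6))) t)] at H
  exact H

lemma key_loop56 (hc : ∀ p : PB, okb p = false → c p = 0)
    (hcomm_a : ∀ m : Fin 7,
      (∑ p, c p • fM p) * fM (.inr (m, m)) = fM (.inr (m, m)) * (∑ p, c p • fM p)) :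
    c (.inr (5, 6)) = 0 := by
  have H := congrFun (congrFun (hcomm_a 4) (.inr (4, 6))) (.inl 3)
  rw [mul_fM, show pmul (.inr ((4 : Fin 7), (4 : Fin 7))) (.inl 3) =
    some (.inr (4, 4)) from by decide] at H
  simp only [Option.elim_some] at H
  rw [Z_entry0 c hc _ _ (fun p hok => (by decide :
    ∀ p : PB, okb p = true →
      ¬ pmul p (.inr (4, 4)) = some (.inr (4, 6))) p hok)] at H
  rw [fM_mul_Z c hc (.inr (4, 4)) (.inr (4, 6)) (.inl 3) (.inr (5, 6)) rfl rfl (fun t _ => (by decide :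
    ∀ t : PB, pmul (.inr ((4 : Fin 7), (4 : Fin 7))) t = some (.inr (4, 6)) ↔
      t = .inr (5, 6)) t)] at H
  rw [Z_entry c hc _ _ (.inr (5, 6)) rfl (fun p _ => (by decide :
    ∀ p : PB, pmul p (.inl 3) = some (.inr (5, 6)) ↔ p = .inr (5, 6)) p)] at H
  exact H.symm

lemma key_chords (hc : ∀ p : PB, okb p = false → c p = 0)
    (hcomm_e : ∀ k : Fin 4,
      (∑ p, c p • fM p) * fM (.inl k) = fM (.inl k) * (∑ p, c p • fM p))
    (hcomm_a : ∀ m : Fin 7,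
      (∑ p, c p • fM p) * fM (.inr (m, m)) = fM (.inr (m, m)) * (∑ p, c p • fM p))
    (i j : Fin 7) (hij : i ≤ j) : c (.inr (i, j)) = 0 := by
  by_cases hst : src2 i = tgt2 j
  · have hcases : (i = 0 ∧ j = 1) ∨ (i = 1 ∧ j = 2) ∨ (i = 4 ∧ j = 5) ∨ (i = 5 ∧ j = 6) := by
      revert hij hst; revert i j; decide
    rcases hcases with ⟨rfl, rfl⟩ | ⟨rfl, rfl⟩ | ⟨rfl, rfl⟩ | ⟨rfl, rfl⟩
    · exact key_loop01 c hc hcomm_a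
    · exact key_loop12 c hc hcomm_a
    · exact key_loop45 c hc hcomm_a
    · exact key_loop56 c hc hcomm_a
  · exact key_offdiag c hc hcomm_e (.inr (i, j)) (decide_eq_true hij) hst

lemma key_vertices (hc : ∀ p : PB, okb p = false → c p = 0)
    (hcomm_a : ∀ m : Fin 7,
      (∑ p, c p • fM p) * fM (.inr (m, m)) = fM (.inr (m, m)) * (∑ p, c p • fM p))
    (k : Fin 4) : c (.inl k) = c (.inl 0) := by
  have e0 : c (.inl 0) = c (.inl 1) := key_eqE c hc hcomm_a 0
  have e3 : c (.inl 1) = c (.inl 2) := key_eqE c hc hcomm_a 3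
  have e4 : c (.inl 2) = c (.inl 3) := key_eqE c hc hcomm_a 4
  have hk : k = 0 ∨ k = 1 ∨ k = 2 ∨ k = 3 :=
    (by decide : ∀ k : Fin 4, k = 0 ∨ k = 1 ∨ k = 2 ∨ k = 3) k
  rcases hk with rfl | rfl | rfl | rfl
  · rfl
  · exact e0.symm
  · exact (e0.trans e3).symm
  · exact ((e0.trans e3).trans e4).symm

end Key

/-! ### Assembling the main theorem -/

lemma B2_one_ne_zero : (1 : B2) ≠ 0 := by
  intro h
  have h2 := congrArg φM h
  rw [map_one, map_zero] at h2
  have h3 := congrFun (congrFun h2 (.inl 0)) (.inl 0)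
  rw [Matrix.one_apply_eq] at h3
  simp at h3

lemma center_le_span :
    (Subalgebra.toSubmodule (Subalgebra.center (ZMod 2) B2) : Submodule (ZMod 2) B2)
      ≤ Submodule.span (ZMod 2) {(1 : B2)} := by
  intro z hz
  rw [Subalgebra.mem_toSubmodule, Subalgebra.mem_center_iff] at hz
  obtain ⟨c0, hc0⟩ := Submodule.mem_span_range_iff_exists_fun (ZMod 2) |>.mp (mem_SP z)
  set c : PB → ZMod 2 := fun p => if okb p = true then c0 p else 0 with hcdef
  have hc : ∀ p : PB, okb p = false → c p = 0 := by
    intro p hp; simp [hcdef, hp]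
  have hzc : z = ∑ p, c p • pel p := by
    rw [← hc0]
    apply Finset.sum_congr rfl
    intro p _
    rcases hok : okb p with _ | _
    · rcases p with k | ⟨i, j⟩
      · exact absurd hok (by simp [okb])
      · have hij : ¬ ((i : ℕ) ≤ (j : ℕ)) :=
          fun h => (of_decide_eq_false hok) (Fin.le_def.mpr h)
        rw [pel, if_neg hij, smul_zero, smul_zero]
    · simp [hcdef, hok]
  have hφz : φM z = ∑ p, c p • fM p := by
    rw [hzc, map_sum]
    apply Finset.sum_congr rfl
    intro p _
    rw [map_smul]
    rcases hok : okb p with _ | _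
    · rw [hc p hok, zero_smul, zero_smul]
    · rw [φM_pel p hok]
  have hcomm_e : ∀ k : Fin 4,
      (∑ p, c p • fM p) * fM (.inl k) = fM (.inl k) * (∑ p, c p • fM p) := by
    intro k
    have h' := congrArg φM (hz (idem2 k))
    rw [map_mul, map_mul, φM_idem, hφz] at h'
    exact h'.symm
  have hcomm_a : ∀ m : Fin 7,
      (∑ p, c p • fM p) * fM (.inr (m, m)) = fM (.inr (m, m)) * (∑ p, c p • fM p) := by
    intro m
    have h' := congrArg φM (hz (arr2 m))
    rw [map_mul, map_mul, φM_arr, hφz] at h'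
    exact h'.symm
  have hchords := key_chords c hc hcomm_e hcomm_a
  have hverts := key_vertices c hc hcomm_a
  rw [Submodule.mem_span_singleton]
  refine ⟨c (.inl 0), ?_⟩
  rw [hzc, Fintype.sum_sum_type]
  have hR : ∑ x : Fin 7 × Fin 7, c (.inr x) • pel (.inr x) = 0 := by
    apply Finset.sum_eq_zero
    intro x _
    by_cases hij : x.1 ≤ x.2
    · rw [hchords x.1 x.2 hij, zero_smul]
    · rw [pel, if_neg (fun h => hij (Fin.le_def.mpr h)), smul_zero]
  rw [hR, add_zero]
  have hL : ∀ k : Fin 4, c (.inl k) • pel (.inl k) = c (.inl 0) • idem2 k := by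
    intro k
    rw [hverts k, pel]
  rw [Finset.sum_congr rfl fun k _ => hL k, ← Finset.smul_sum, ← one_eq_sum_idem2]

/-- the center of B(Z_2) is one-dimensional over F_2,
spanned by 1 = i_0 + i_1 + i_2 + i_3. -/
theorem stmt_5 :
    Subalgebra.toSubmodule (Subalgebra.center (ZMod 2) B2) =
      Submodule.span (ZMod 2) {(1 : B2)} ∧
    Module.finrank (ZMod 2) (Subalgebra.center (ZMod 2) B2) = 1 ∧
    (1 : B2) = ∑ k : Fin 4, idem2 k := by
  have hmain : Subalgebra.toSubmodule (Subalgebra.center (ZMod 2) B2) =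
      Submodule.span (ZMod 2) {(1 : B2)} := by
    apply le_antisymm center_le_span
    rw [Submodule.span_le, Set.singleton_subset_iff]
    exact Subalgebra.one_mem _
  refine ⟨hmain, ?_, one_eq_sum_idem2⟩
  rw [← Subalgebra.finrank_toSubmodule, hmain]
  exact finrank_span_singleton B2_one_ne_zero
end
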